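/- Let π : Y → X be a factor map between systems (Y,S,T) and (X,S,T) with commuting transformations, where Y is minimal. Then the image of Q_{S,T}(Y) under π×π×π×π equals Q_{S,T}(X), and consequently π×π maps Q_S(Y) onto Q_S(X) and Q_T(Y) onto Q_T(X). -/

import Mathlib

/-- The `n`-th integer iterate of a homeomorphism, as a function. -/
def hpow {X : Type*} [TopologicalSpace X] (S : X ≃ₜ X) (n : ℤ) : X → X :=
  ⇑(S.toEquiv ^ n)

variable {X : Type*} [TopologicalSpace X]

def cube (S T : X ≃ₜ X) : Set (X × X × X × X) :=
  closure {p | ∃ (x : X) (n m : ℤ),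
    p = (x, hpow S n x, hpow T m x, hpow S n (hpow T m x))}

def cube2 (S : X ≃ₜ X) : Set (X × X) :=
  closure {p | ∃ (x : X) (n : ℤ), p = (x, hpow S n x)}

def relS (S T : X ≃ₜ X) : Set (X × X) :=
  {p | ∃ a : X, (p.1, p.2, a, a) ∈ cube S T}

def relT (S T : X ≃ₜ X) : Set (X × X) :=
  {p | ∃ b : X, (p.1, b, p.2, b) ∈ cube S T}

def minimalST (S T : X ≃ₜ X) : Prop :=
  ∀ x : X, Dense {y : X | ∃ n m : ℤ, y = hpow S n (hpow T m x)}

def minimal1 (S : X ≃ₜ X) : Prop :=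
  ∀ x : X, Dense {y : X | ∃ n : ℤ, y = hpow S n x}

def distalST {Y : Type*} [MetricSpace Y] (S T : Y ≃ₜ Y) : Prop :=
  ∀ x y : Y, x ≠ y → ∃ ε > 0, ∀ n m : ℤ,
    ε ≤ dist (hpow S n (hpow T m x)) (hpow S n (hpow T m y))

def proxT {Y : Type*} [MetricSpace Y] (T : Y ≃ₜ Y) : Set (Y × Y) :=
  {p | ∀ ε > 0, ∃ m : ℤ, dist (hpow T m p.1) (hpow T m p.2) < ε}


lemma hpow_semiconj {A B : Type*} [TopologicalSpace A] [TopologicalSpace B]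
    (S : A ≃ₜ A) (S' : B ≃ₜ B) (f : A → B) (h : ∀ a, f (S a) = S' (f a)) :
    ∀ (n : ℤ) (a : A), f (hpow S n a) = hpow S' n (f a) := by
  have hsymm : ∀ a, f (S.symm a) = S'.symm (f a) := by
    intro a
    have := h (S.symm a)
    simp only [Homeomorph.apply_symm_apply] at this
    rw [this]
    simp
  intro n
  induction n using Int.induction_on with
  | zero => intro a; simp [hpow]
  | succ k ih =>
      intro a
      have e1 : S.toEquiv ^ ((k : ℤ) + 1) = S.toEquiv ^ (k : ℤ) * S.toEquiv :=
        zpow_add_one _ _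
      have e2 : S'.toEquiv ^ ((k : ℤ) + 1) = S'.toEquiv ^ (k : ℤ) * S'.toEquiv :=
        zpow_add_one _ _
      simp only [hpow, e1, e2, Equiv.Perm.mul_apply]
      rw [show (S.toEquiv a) = S a from rfl, show (S'.toEquiv (f a)) = S' (f a) from rfl,
        ← h a]
      exact ih (S a)
  | pred k ih =>
      intro a
      have e1 : S.toEquiv ^ (-(k : ℤ) - 1) = S.toEquiv ^ (-(k : ℤ)) * (S.toEquiv)⁻¹ :=
        zpow_sub_one _ _
      have e2 : S'.toEquiv ^ (-(k : ℤ) - 1) = S'.toEquiv ^ (-(k : ℤ)) * (S'.toEquiv)⁻¹ :=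
        zpow_sub_one _ _
      have h3 : (-(k : ℤ) - 1) = (-((k : ℤ) + 1)) := by ring
      simp only [hpow, ← h3, e1, e2, Equiv.Perm.mul_apply]
      rw [show ((S.toEquiv)⁻¹ a) = S.symm a from rfl,
        show ((S'.toEquiv)⁻¹ (f a)) = S'.symm (f a) from rfl, ← hsymm a]
      exact ih (S.symm a)

lemma image_closure_eq_closure_image {A B : Type*} [TopologicalSpace A] [TopologicalSpace B]
    [CompactSpace A] [T2Space B] {f : A → B} (hf : Continuous f) (s : Set A) :
    f '' closure s = closure (f '' s) := by
  refine Set.Subset.antisymm (image_closure_subset_closure_image hf) ?_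
  exact closure_minimal (Set.image_mono (f := f) subset_closure)
    (hf.isClosedMap _ isClosed_closure)

theorem stmt2 {Y X : Type*} [MetricSpace Y] [CompactSpace Y]
    [MetricSpace X] [CompactSpace X]
    (SY TY : Y ≃ₜ Y) (SX TX : X ≃ₜ X)
    (hY : ∀ y, SY (TY y) = TY (SY y)) (hX : ∀ x, SX (TX x) = TX (SX x))
    (π : Y → X) (hcont : Continuous π) (hsurj : Function.Surjective π)
    (hπS : ∀ y, π (SY y) = SX (π y)) (hπT : ∀ y, π (TY y) = TX (π y))
    (hmin : minimalST SY TY) :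
    (fun p : Y × Y × Y × Y => (π p.1, π p.2.1, π p.2.2.1, π p.2.2.2)) '' cube SY TY
      = cube SX TX ∧
    (fun p : Y × Y => (π p.1, π p.2)) '' cube2 SY = cube2 SX ∧
    (fun p : Y × Y => (π p.1, π p.2)) '' cube2 TY = cube2 TX := by
  have hS := hpow_semiconj SY SX π hπS
  have hT := hpow_semiconj TY TX π hπT
  refine ⟨?_, ?_, ?_⟩
  · have him : (fun p : Y × Y × Y × Y => (π p.1, π p.2.1, π p.2.2.1, π p.2.2.2)) ''
        {p | ∃ (x : Y) (n m : ℤ), p = (x, hpow SY n x, hpow TY m x, hpow SY n (hpow TY m x))}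
        = {p | ∃ (x : X) (n m : ℤ), p = (x, hpow SX n x, hpow TX m x, hpow SX n (hpow TX m x))} := by
      ext p
      constructor
      · rintro ⟨q, ⟨y, n, m, rfl⟩, rfl⟩
        exact ⟨π y, n, m, by simp [hS, hT]⟩
      · rintro ⟨x, n, m, rfl⟩
        obtain ⟨y, rfl⟩ := hsurj x
        exact ⟨(y, hpow SY n y, hpow TY m y, hpow SY n (hpow TY m y)), ⟨y, n, m, rfl⟩,
          by simp [hS, hT]⟩
    rw [cube, cube, image_closure_eq_closure_image (by fun_prop), him]
  · have him : (fun p : Y × Y => (π p.1, π p.2)) ''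
        {p | ∃ (x : Y) (n : ℤ), p = (x, hpow SY n x)}
        = {p | ∃ (x : X) (n : ℤ), p = (x, hpow SX n x)} := by
      ext p
      constructor
      · rintro ⟨q, ⟨y, n, rfl⟩, rfl⟩
        exact ⟨π y, n, by simp [hS]⟩
      · rintro ⟨x, n, rfl⟩
        obtain ⟨y, rfl⟩ := hsurj x
        exact ⟨(y, hpow SY n y), ⟨y, n, rfl⟩, by simp [hS]⟩
    rw [cube2, cube2, image_closure_eq_closure_image (by fun_prop), him]
  · have him : (fun p : Y × Y => (π p.1, π p.2)) ''
        {p | ∃ (x : Y) (n : ℤ), p = (x, hpow TY n x)}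
        = {p | ∃ (x : X) (n : ℤ), p = (x, hpow TX n x)} := by
      ext p
      constructor
      · rintro ⟨q, ⟨y, n, rfl⟩, rfl⟩
        exact ⟨π y, n, by simp [hT]⟩
      · rintro ⟨x, n, rfl⟩
        obtain ⟨y, rfl⟩ := hsurj x
        exact ⟨(y, hpow TY n y), ⟨y, n, rfl⟩, by simp [hT]⟩
    rw [cube2, cube2, image_closure_eq_closure_image (by fun_prop), him]
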